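/- The Motzkin polynomial M(x,y,z) = x^4 y^2 + x^2 y^4 + z^6 - 3 x^2 y^2 z^2 is not a sum of squares of polynomials in R[x,y,z]. -/

import Mathlib

open MvPolynomial

noncomputable def fe (a b c : ℕ) : Fin 3 →₀ ℕ :=
  Finsupp.single 0 a + Finsupp.single 1 b + Finsupp.single 2 c

lemma fe0 (a b c : ℕ) : fe a b c 0 = a := by simp [fe, Finsupp.single_apply]
lemma fe1 (a b c : ℕ) : fe a b c 1 = b := by simp [fe, Finsupp.single_apply]
lemma fe2 (a b c : ℕ) : fe a b c 2 = c := by simp [fe, Finsupp.single_apply]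

lemma fe_ext (t : Fin 3 →₀ ℕ) : t = fe (t 0) (t 1) (t 2) := by
  ext i
  fin_cases i <;> simp [fe, Finsupp.single_apply]

lemma eq_fe_of (u : Fin 3 →₀ ℕ) (a b c : ℕ) (h0 : u 0 = a) (h1 : u 1 = b) (h2 : u 2 = c) :
    u = fe a b c := by
  rw [← h0, ← h1, ← h2]; exact fe_ext u

lemma fe_add (a b c a' b' c' : ℕ) : fe a b c + fe a' b' c' = fe (a+a') (b+b') (c+c') := by
  ext i; fin_cases i <;> simp [fe, Finsupp.single_apply]

lemma fe_eq_fe {a b c a' b' c' : ℕ} : fe a b c = fe a' b' c' ↔ a = a' ∧ b = b' ∧ c = c' := by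
  constructor
  · intro h
    exact ⟨by have := DFunLike.congr_fun h 0; rwa [fe0, fe0] at this,
           by have := DFunLike.congr_fun h 1; rwa [fe1, fe1] at this,
           by have := DFunLike.congr_fun h 2; rwa [fe2, fe2] at this⟩
  · rintro ⟨rfl, rfl, rfl⟩; rfl

lemma coeff_M (m : Fin 3 →₀ ℕ) :
    coeff m ((X 0 : MvPolynomial (Fin 3) ℝ) ^ 4 * (X 1) ^ 2 + (X 0) ^ 2 * (X 1) ^ 4 + (X 2) ^ 6 -
            3 * (X 0) ^ 2 * (X 1) ^ 2 * (X 2) ^ 2) =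
      (if fe 4 2 0 = m then (1:ℝ) else 0) + (if fe 2 4 0 = m then 1 else 0)
        + (if fe 0 0 6 = m then 1 else 0) + (if fe 2 2 2 = m then -3 else 0) := by
  have h3 : (3 : MvPolynomial (Fin 3) ℝ) = C 3 := (map_ofNat C 3).symm
  rw [h3]
  simp [coeff_sub, X_pow_eq_monomial, monomial_mul, coeff_monomial, fe, C_mul_monomial,
    sub_eq_add_neg]
  split_ifs <;> norm_num <;> simp_all

/-- The Motzkin polynomial is not a sum of squares of polynomials in `ℝ[x,y,z]`. -/
theorem motzkin_not_sos :
    ¬ ∃ (k : ℕ) (q : Fin k → MvPolynomial (Fin 3) ℝ),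
        (X 0) ^ 4 * (X 1) ^ 2 + (X 0) ^ 2 * (X 1) ^ 4 + (X 2) ^ 6 -
            3 * (X 0) ^ 2 * (X 1) ^ 2 * (X 2) ^ 2 =
          ∑ i, (q i) ^ 2 := by
  rintro ⟨k, q, hM⟩
  -- coefficient of the SOS sum at a "doubled" monomial, when all cross terms vanish
  have key : ∀ a m : Fin 3 →₀ ℕ, a + a = m →
      (∀ i : Fin k, ∀ u v : Fin 3 →₀ ℕ, u + v = m → ¬(u = a ∧ v = a) →
        coeff u (q i) * coeff v (q i) = 0) →
      coeff m (∑ i, (q i) ^ 2) = ∑ i, coeff a (q i) ^ 2 := by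
    intro a m hm H
    rw [coeff_sum]
    refine Finset.sum_congr rfl fun i _ => ?_
    rw [sq, coeff_mul, sq]
    refine Finset.sum_eq_single_of_mem (a, a) (Finset.HasAntidiagonal.mem_antidiagonal.mpr hm) ?_
    rintro ⟨u, v⟩ hb hne
    exact H i u v (Finset.HasAntidiagonal.mem_antidiagonal.mp hb)
      (fun h => hne (Prod.ext h.1 h.2))
  have cM : ∀ m : Fin 3 →₀ ℕ, coeff m (∑ i, (q i) ^ 2) =
      (if fe 4 2 0 = m then (1:ℝ) else 0) + (if fe 2 4 0 = m then 1 else 0)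
        + (if fe 0 0 6 = m then 1 else 0) + (if fe 2 2 2 = m then -3 else 0) := by
    intro m; rw [← hM]; exact coeff_M m
  have zsum : ∀ a : Fin 3 →₀ ℕ, (∑ i, coeff a (q i) ^ 2) = 0 → ∀ i, coeff a (q i) = 0 := by
    intro a h i
    have h2 := (Finset.sum_eq_zero_iff_of_nonneg
      fun j _ => sq_nonneg (coeff a (q j))).mp h i (Finset.mem_univ i)
    exact pow_eq_zero_iff two_ne_zero |>.mp h2
  have step : ∀ a : Fin 3 →₀ ℕ,
      ((if fe 4 2 0 = a + a then (1:ℝ) else 0) + (if fe 2 4 0 = a + a then 1 else 0)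
        + (if fe 0 0 6 = a + a then 1 else 0) + (if fe 2 2 2 = a + a then -3 else 0)) = 0 →
      (∀ i : Fin k, ∀ u v : Fin 3 →₀ ℕ, u + v = a + a → ¬(u = a ∧ v = a) →
        coeff u (q i) * coeff v (q i) = 0) →
      ∀ i, coeff a (q i) = 0 := by
    intro a h0 H
    apply zsum
    rw [← key a (a + a) rfl H, cM]
    exact h0
  -- components of an antidiagonal equation
  have comp : ∀ (u v : Fin 3 →₀ ℕ) (a b c : ℕ), u + v = fe a b c →
      u 0 + v 0 = a ∧ u 1 + v 1 = b ∧ u 2 + v 2 = c := by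
    intro u v a b c h
    exact ⟨by have := DFunLike.congr_fun h 0; rwa [Finsupp.add_apply, fe0] at this,
           by have := DFunLike.congr_fun h 1; rwa [Finsupp.add_apply, fe1] at this,
           by have := DFunLike.congr_fun h 2; rwa [Finsupp.add_apply, fe2] at this⟩
  -- Row lemmas: x-free monomials with z-degree ≤ 2
  have row0 : ∀ j, ∀ i : Fin k, coeff (fe 0 j 0) (q i) = 0 := by
    intro j
    induction j using Nat.strong_induction_on with
    | _ j IH =>
      apply step
      · rw [fe_add]; simp [fe_eq_fe]
      · rintro i u v huv hne
        rw [fe_add] at huv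
        obtain ⟨e0, e1, e2⟩ := comp u v _ _ _ huv
        rcases (by omega : u 1 < j ∨ v 1 < j ∨ (u 1 = j ∧ v 1 = j)) with h | h | ⟨h1, h2⟩
        · rw [eq_fe_of u 0 (u 1) 0 (by omega) rfl (by omega), IH (u 1) h i, zero_mul]
        · rw [eq_fe_of v 0 (v 1) 0 (by omega) rfl (by omega), IH (v 1) h i, mul_zero]
        · exact absurd ⟨eq_fe_of u 0 j 0 (by omega) h1 (by omega),
            eq_fe_of v 0 j 0 (by omega) h2 (by omega)⟩ hne
  have row1 : ∀ j, ∀ i : Fin k, coeff (fe 0 j 1) (q i) = 0 := by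
    intro j
    induction j using Nat.strong_induction_on with
    | _ j IH =>
      apply step
      · rw [fe_add]; simp [fe_eq_fe]
      · rintro i u v huv hne
        rw [fe_add] at huv
        obtain ⟨e0, e1, e2⟩ := comp u v _ _ _ huv
        rcases (by omega : u 2 = 0 ∨ v 2 = 0 ∨ (u 2 = 1 ∧ v 2 = 1)) with h | h | ⟨hu2, hv2⟩
        · rw [eq_fe_of u 0 (u 1) 0 (by omega) rfl h, row0 (u 1) i, zero_mul]
        · rw [eq_fe_of v 0 (v 1) 0 (by omega) rfl h, row0 (v 1) i, mul_zero]
        · rcases (by omega : u 1 < j ∨ v 1 < j ∨ (u 1 = j ∧ v 1 = j)) with h | h | ⟨h1, h2⟩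
          · rw [eq_fe_of u 0 (u 1) 1 (by omega) rfl hu2, IH (u 1) h i, zero_mul]
          · rw [eq_fe_of v 0 (v 1) 1 (by omega) rfl hv2, IH (v 1) h i, mul_zero]
          · exact absurd ⟨eq_fe_of u 0 j 1 (by omega) h1 hu2,
              eq_fe_of v 0 j 1 (by omega) h2 hv2⟩ hne
  have row2 : ∀ j, ∀ i : Fin k, coeff (fe 0 j 2) (q i) = 0 := by
    intro j
    induction j using Nat.strong_induction_on with
    | _ j IH =>
      apply step
      · rw [fe_add]; simp [fe_eq_fe]
      · rintro i u v huv hne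
        rw [fe_add] at huv
        obtain ⟨e0, e1, e2⟩ := comp u v _ _ _ huv
        rcases (by omega : u 2 = 0 ∨ u 2 = 1 ∨ v 2 = 0 ∨ v 2 = 1 ∨ (u 2 = 2 ∧ v 2 = 2))
          with h | h | h | h | ⟨hu2, hv2⟩
        · rw [eq_fe_of u 0 (u 1) 0 (by omega) rfl h, row0 (u 1) i, zero_mul]
        · rw [eq_fe_of u 0 (u 1) 1 (by omega) rfl h, row1 (u 1) i, zero_mul]
        · rw [eq_fe_of v 0 (v 1) 0 (by omega) rfl h, row0 (v 1) i, mul_zero]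
        · rw [eq_fe_of v 0 (v 1) 1 (by omega) rfl h, row1 (v 1) i, mul_zero]
        · rcases (by omega : u 1 < j ∨ v 1 < j ∨ (u 1 = j ∧ v 1 = j)) with h | h | ⟨h1, h2⟩
          · rw [eq_fe_of u 0 (u 1) 2 (by omega) rfl hu2, IH (u 1) h i, zero_mul]
          · rw [eq_fe_of v 0 (v 1) 2 (by omega) rfl hv2, IH (v 1) h i, mul_zero]
          · exact absurd ⟨eq_fe_of u 0 j 2 (by omega) h1 hu2,
              eq_fe_of v 0 j 2 (by omega) h2 hv2⟩ hne
  -- Row lemmas: y-free monomials with z-degree ≤ 2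
  have row0' : ∀ j, ∀ i : Fin k, coeff (fe j 0 0) (q i) = 0 := by
    intro j
    induction j using Nat.strong_induction_on with
    | _ j IH =>
      apply step
      · rw [fe_add]; simp [fe_eq_fe]
      · rintro i u v huv hne
        rw [fe_add] at huv
        obtain ⟨e0, e1, e2⟩ := comp u v _ _ _ huv
        rcases (by omega : u 0 < j ∨ v 0 < j ∨ (u 0 = j ∧ v 0 = j)) with h | h | ⟨h1, h2⟩
        · rw [eq_fe_of u (u 0) 0 0 rfl (by omega) (by omega), IH (u 0) h i, zero_mul]
        · rw [eq_fe_of v (v 0) 0 0 rfl (by omega) (by omega), IH (v 0) h i, mul_zero]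
        · exact absurd ⟨eq_fe_of u j 0 0 h1 (by omega) (by omega),
            eq_fe_of v j 0 0 h2 (by omega) (by omega)⟩ hne
  have row1' : ∀ j, ∀ i : Fin k, coeff (fe j 0 1) (q i) = 0 := by
    intro j
    induction j using Nat.strong_induction_on with
    | _ j IH =>
      apply step
      · rw [fe_add]; simp [fe_eq_fe]
      · rintro i u v huv hne
        rw [fe_add] at huv
        obtain ⟨e0, e1, e2⟩ := comp u v _ _ _ huv
        rcases (by omega : u 2 = 0 ∨ v 2 = 0 ∨ (u 2 = 1 ∧ v 2 = 1)) with h | h | ⟨hu2, hv2⟩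
        · rw [eq_fe_of u (u 0) 0 0 rfl (by omega) h, row0' (u 0) i, zero_mul]
        · rw [eq_fe_of v (v 0) 0 0 rfl (by omega) h, row0' (v 0) i, mul_zero]
        · rcases (by omega : u 0 < j ∨ v 0 < j ∨ (u 0 = j ∧ v 0 = j)) with h | h | ⟨h1, h2⟩
          · rw [eq_fe_of u (u 0) 0 1 rfl (by omega) hu2, IH (u 0) h i, zero_mul]
          · rw [eq_fe_of v (v 0) 0 1 rfl (by omega) hv2, IH (v 0) h i, mul_zero]
          · exact absurd ⟨eq_fe_of u j 0 1 h1 (by omega) hu2,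
              eq_fe_of v j 0 1 h2 (by omega) hv2⟩ hne
  have row2' : ∀ j, ∀ i : Fin k, coeff (fe j 0 2) (q i) = 0 := by
    intro j
    induction j using Nat.strong_induction_on with
    | _ j IH =>
      apply step
      · rw [fe_add]; simp [fe_eq_fe]
      · rintro i u v huv hne
        rw [fe_add] at huv
        obtain ⟨e0, e1, e2⟩ := comp u v _ _ _ huv
        rcases (by omega : u 2 = 0 ∨ u 2 = 1 ∨ v 2 = 0 ∨ v 2 = 1 ∨ (u 2 = 2 ∧ v 2 = 2))
          with h | h | h | h | ⟨hu2, hv2⟩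
        · rw [eq_fe_of u (u 0) 0 0 rfl (by omega) h, row0' (u 0) i, zero_mul]
        · rw [eq_fe_of u (u 0) 0 1 rfl (by omega) h, row1' (u 0) i, zero_mul]
        · rw [eq_fe_of v (v 0) 0 0 rfl (by omega) h, row0' (v 0) i, mul_zero]
        · rw [eq_fe_of v (v 0) 0 1 rfl (by omega) h, row1' (v 0) i, mul_zero]
        · rcases (by omega : u 0 < j ∨ v 0 < j ∨ (u 0 = j ∧ v 0 = j)) with h | h | ⟨h1, h2⟩
          · rw [eq_fe_of u (u 0) 0 2 rfl (by omega) hu2, IH (u 0) h i, zero_mul]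
          · rw [eq_fe_of v (v 0) 0 2 rfl (by omega) hv2, IH (v 0) h i, mul_zero]
          · exact absurd ⟨eq_fe_of u j 0 2 h1 (by omega) hu2,
              eq_fe_of v j 0 2 h2 (by omega) hv2⟩ hne
  -- the xy coefficient vanishes
  have cxy : ∀ i : Fin k, coeff (fe 1 1 0) (q i) = 0 := by
    apply step
    · rw [fe_add]; simp [fe_eq_fe]
    · rintro i u v huv hne
      rw [fe_add] at huv
      obtain ⟨e0, e1, e2⟩ := comp u v _ _ _ huv
      rcases (by omega : u 0 = 0 ∨ v 0 = 0 ∨ (u 0 = 1 ∧ v 0 = 1)) with h | h | ⟨hu0, hv0⟩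
      · rw [eq_fe_of u 0 (u 1) 0 h rfl (by omega), row0 (u 1) i, zero_mul]
      · rw [eq_fe_of v 0 (v 1) 0 h rfl (by omega), row0 (v 1) i, mul_zero]
      · rcases (by omega : u 1 = 0 ∨ v 1 = 0 ∨ (u 1 = 1 ∧ v 1 = 1)) with h | h | ⟨h1, h2⟩
        · rw [eq_fe_of u 1 0 0 hu0 h (by omega), row0' 1 i, zero_mul]
        · rw [eq_fe_of v 1 0 0 hv0 h (by omega), row0' 1 i, mul_zero]
        · exact absurd ⟨eq_fe_of u 1 1 0 hu0 h1 (by omega),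
            eq_fe_of v 1 1 0 hv0 h2 (by omega)⟩ hne
  -- final contradiction via the coefficient of x^2 y^2 z^2
  have hfin : coeff (fe 2 2 2) (∑ i, (q i) ^ 2) = ∑ i, coeff (fe 1 1 1) (q i) ^ 2 := by
    apply key _ _ (by rw [fe_add])
    rintro i u v huv hne
    obtain ⟨e0, e1, e2⟩ := comp u v _ _ _ huv
    rcases (by omega : u 0 = 0 ∨ v 0 = 0 ∨ (u 0 = 1 ∧ v 0 = 1)) with h | h | ⟨hu0, hv0⟩
    · rcases (by omega : u 2 = 0 ∨ u 2 = 1 ∨ u 2 = 2) with h2 | h2 | h2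
      · rw [eq_fe_of u 0 (u 1) 0 h rfl h2, row0 (u 1) i, zero_mul]
      · rw [eq_fe_of u 0 (u 1) 1 h rfl h2, row1 (u 1) i, zero_mul]
      · rw [eq_fe_of u 0 (u 1) 2 h rfl h2, row2 (u 1) i, zero_mul]
    · rcases (by omega : v 2 = 0 ∨ v 2 = 1 ∨ v 2 = 2) with h2 | h2 | h2
      · rw [eq_fe_of v 0 (v 1) 0 h rfl h2, row0 (v 1) i, mul_zero]
      · rw [eq_fe_of v 0 (v 1) 1 h rfl h2, row1 (v 1) i, mul_zero]
      · rw [eq_fe_of v 0 (v 1) 2 h rfl h2, row2 (v 1) i, mul_zero]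
    · rcases (by omega : u 1 = 0 ∨ v 1 = 0 ∨ (u 1 = 1 ∧ v 1 = 1)) with h | h | ⟨hu1, hv1⟩
      · rcases (by omega : u 2 = 0 ∨ u 2 = 1 ∨ u 2 = 2) with h2 | h2 | h2
        · rw [eq_fe_of u 1 0 0 hu0 h h2, row0' 1 i, zero_mul]
        · rw [eq_fe_of u 1 0 1 hu0 h h2, row1' 1 i, zero_mul]
        · rw [eq_fe_of u 1 0 2 hu0 h h2, row2' 1 i, zero_mul]
      · rcases (by omega : v 2 = 0 ∨ v 2 = 1 ∨ v 2 = 2) with h2 | h2 | h2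
        · rw [eq_fe_of v 1 0 0 hv0 h h2, row0' 1 i, mul_zero]
        · rw [eq_fe_of v 1 0 1 hv0 h h2, row1' 1 i, mul_zero]
        · rw [eq_fe_of v 1 0 2 hv0 h h2, row2' 1 i, mul_zero]
      · rcases (by omega : u 2 = 0 ∨ v 2 = 0 ∨ (u 2 = 1 ∧ v 2 = 1)) with h | h | ⟨hu2, hv2⟩
        · rw [eq_fe_of u 1 1 0 hu0 hu1 h, cxy i, zero_mul]
        · rw [eq_fe_of v 1 1 0 hv0 hv1 h, cxy i, mul_zero]
        · exact absurd ⟨eq_fe_of u 1 1 1 hu0 hu1 hu2, eq_fe_of v 1 1 1 hv0 hv1 hv2⟩ hne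
  rw [cM] at hfin
  simp [fe_eq_fe] at hfin
  have hnn : (0:ℝ) ≤ ∑ i, coeff (fe 1 1 1) (q i) ^ 2 :=
    Finset.sum_nonneg fun i _ => sq_nonneg _
  linarith [hfin ▸ hnn]
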